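/- For every n ≥ 0, c_{n,n+1} = α_{n+1} · ℙ( Σ_{i=k}^n Z_i ≥ 0 for every k = 1, 2, …, n ), where Z_i = F_i − H_i. In particular, when α_{n+1} > 0, P^n := c_{n,n+1}/α_{n+1} equals this probability. -/

import Mathlib

open MeasureTheory ProbabilityTheory

namespace CSuccAux

open Finset

/-! ### Combinatorial layer -/

def Wc (f h : ℕ → ℕ) (j k : ℕ) : Prop :=
  ∀ x ∈ Icc 1 j, (∑ i ∈ Icc x (j - 1), h i) + 1 ≤ ∑ i ∈ Icc x (k - 1), f i

def Ac (h : ℕ → ℕ) (j m : ℕ) : Prop :=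
  ∀ i ∈ Icc (max j 1) m, h i = if i = j then 1 else 0

def Bc (f : ℕ → ℕ) (k n : ℕ) : Prop :=
  ∀ i ∈ Icc k n, f i = if i = k then 1 else 0

lemma sum_split (g : ℕ → ℕ) {x j m : ℕ} (hj : 1 ≤ j) (hxj : x ≤ j) (hjm : j ≤ m)
    (hj1 : g j = 1) (htail : ∀ i ∈ Icc (j + 1) m, g i = 0) :
    ∑ i ∈ Icc x m, g i = (∑ i ∈ Icc x (j - 1), g i) + 1 := by
  have h1 : Icc x m = Ico x (m + 1) := by rw [Finset.Ico_add_one_right_eq_Icc]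
  have h2 : Icc x (j - 1) = Ico x j := by
    rw [← Finset.Ico_add_one_right_eq_Icc]
    congr 1
    omega
  have h3 : (∑ i ∈ Ico x j, g i) + ∑ i ∈ Ico j (m + 1), g i = ∑ i ∈ Ico x (m + 1), g i :=
    Finset.sum_Ico_consecutive g hxj (by omega)
  have h4 : Ico j (m + 1) = insert j (Icc (j + 1) m) := by
    ext i
    simp only [mem_Ico, mem_insert, mem_Icc]
    omega
  have h5 : ∑ i ∈ Ico j (m + 1), g i = 1 := by
    rw [h4, Finset.sum_insert (by simp), hj1, Finset.sum_eq_zero htail]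
    omega
  rw [h1, h2, ← h3, h5]

lemma exists_last (g : ℕ → ℕ) (hg : ∀ i, g i ≤ 1) {a b : ℕ}
    (hpos : 1 ≤ ∑ i ∈ Icc a b, g i) :
    ∃ k ∈ Icc a b, Bc g k b := by
  classical
  set K := (Icc a b).filter (fun i => g i ≠ 0) with hK
  have hne : K.Nonempty := by
    by_contra hemp
    rw [Finset.not_nonempty_iff_eq_empty] at hemp
    have hz : ∑ i ∈ Icc a b, g i = 0 := by
      apply Finset.sum_eq_zero
      intro i hi
      by_contra hgi
      have hiK : i ∈ K := Finset.mem_filter.2 ⟨hi, hgi⟩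
      rw [hemp] at hiK
      simp at hiK
    omega
  set k := K.max' hne with hk
  have hkK : k ∈ K := K.max'_mem hne
  have hkmem : k ∈ Icc a b := (Finset.mem_filter.1 hkK).1
  have hkf : g k ≠ 0 := (Finset.mem_filter.1 hkK).2
  simp only [mem_Icc] at hkmem
  refine ⟨k, by simp only [mem_Icc]; omega, ?_⟩
  intro i hi
  simp only [mem_Icc] at hi
  by_cases h : i = k
  · rw [h, if_pos rfl]
    have := hg k
    omega
  · rw [if_neg h]
    by_contra hgi
    have hik : i ∈ K := Finset.mem_filter.2 ⟨by simp only [mem_Icc]; omega, hgi⟩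
    have := Finset.le_max' K i hik
    rw [← hk] at this
    omega

lemma exists_lastH (h : ℕ → ℕ) (hh : ∀ i, h i ≤ 1) (m : ℕ) :
    ∃ j ∈ range (m + 1), Ac h j m := by
  classical
  set K := (Icc 1 m).filter (fun i => h i ≠ 0) with hK
  by_cases hne : K.Nonempty
  · set j := K.max' hne with hj
    have hjK : j ∈ K := K.max'_mem hne
    have hjmem : j ∈ Icc 1 m := (Finset.mem_filter.1 hjK).1
    have hjf : h j ≠ 0 := (Finset.mem_filter.1 hjK).2
    simp only [mem_Icc] at hjmem
    refine ⟨j, by simp only [mem_range]; omega, ?_⟩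
    intro i hi
    simp only [mem_Icc, max_le_iff] at hi
    by_cases he : i = j
    · rw [he, if_pos rfl]
      have := hh j
      omega
    · rw [if_neg he]
      by_contra hgi
      have hik : i ∈ K := Finset.mem_filter.2 ⟨by simp only [mem_Icc]; omega, hgi⟩
      have := Finset.le_max' K i hik
      rw [← hj] at this
      omega
  · refine ⟨0, by simp, ?_⟩
    intro i hi
    simp only [mem_Icc, max_le_iff] at hi
    have hiK : i ∉ K := fun hc => hne ⟨i, hc⟩
    rw [hK, Finset.mem_filter, not_and, not_not] at hiK
    have h0 : h i = 0 := hiK (by simp only [mem_Icc]; omega)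
    have hne0 : i ≠ 0 := by omega
    simp [hne0, h0]

lemma key {f h : ℕ → ℕ} (hf : ∀ i, f i ≤ 1) (hh : ∀ i, h i ≤ 1) {m n : ℕ} (_hmn : m ≤ n) :
    Wc f h (m + 1) (n + 1) ↔
      ∃ j ∈ range (m + 1), ∃ k ∈ Icc (m + 1) n, Ac h j m ∧ Bc f k n ∧ Wc f h j k := by
  constructor
  · intro hW
    have hWx : ∀ x ∈ Icc 1 (m + 1), (∑ i ∈ Icc x m, h i) + 1 ≤ ∑ i ∈ Icc x n, f i := by
      intro x hx
      have := hW x hx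
      simpa using this
    have h1 : 1 ≤ ∑ i ∈ Icc (m + 1) n, f i := by
      have := hWx (m + 1) (by simp)
      have he : ∑ i ∈ Icc (m + 1) m, h i = 0 := by
        rw [Finset.Icc_eq_empty (by omega)]; simp
      omega
    obtain ⟨k, hkmem, hkB⟩ := exists_last f hf h1
    obtain ⟨j, hjmem, hjA⟩ := exists_lastH h hh m
    simp only [mem_Icc] at hkmem
    simp only [mem_range] at hjmem
    refine ⟨j, by simp only [mem_range]; omega, k, by simp only [mem_Icc]; omega, hjA, hkB, ?_⟩
    intro x hx
    simp only [mem_Icc] at hx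
    have hj1 : 1 ≤ j := by omega
    have hjval : h j = 1 := by
      have := hjA j (by simp only [mem_Icc, max_le_iff]; omega)
      simpa using this
    have hjtail : ∀ i ∈ Icc (j + 1) m, h i = 0 := by
      intro i hi
      simp only [mem_Icc] at hi
      have := hjA i (by simp only [mem_Icc, max_le_iff]; omega)
      rw [if_neg (by omega)] at this
      exact this
    have hkval : f k = 1 := by
      have := hkB k (by simp only [mem_Icc]; omega)
      simpa using this
    have hktail : ∀ i ∈ Icc (k + 1) n, f i = 0 := by
      intro i hi
      simp only [mem_Icc] at hi
      have := hkB i (by simp only [mem_Icc]; omega)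
      rw [if_neg (by omega)] at this
      exact this
    have hsh : ∑ i ∈ Icc x m, h i = (∑ i ∈ Icc x (j - 1), h i) + 1 :=
      sum_split h hj1 hx.2 (by omega) hjval hjtail
    have hsf : ∑ i ∈ Icc x n, f i = (∑ i ∈ Icc x (k - 1), f i) + 1 :=
      sum_split f (by omega) (by omega) (by omega) hkval hktail
    have := hWx x (by simp only [mem_Icc]; omega)
    omega
  · rintro ⟨j, hjmem, k, hkmem, hjA, hkB, hWjk⟩
    simp only [mem_range] at hjmem
    simp only [mem_Icc] at hkmem
    intro x hx
    simp only [mem_Icc] at hx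
    simp only [Nat.add_sub_cancel]
    have hkval : f k = 1 := by
      have := hkB k (by simp only [mem_Icc]; omega)
      simpa using this
    have hktail : ∀ i ∈ Icc (k + 1) n, f i = 0 := by
      intro i hi
      simp only [mem_Icc] at hi
      have := hkB i (by simp only [mem_Icc]; omega)
      rw [if_neg (by omega)] at this
      exact this
    have hsf : ∑ i ∈ Icc x n, f i = (∑ i ∈ Icc x (k - 1), f i) + 1 :=
      sum_split f (by omega) (by omega) (by omega) hkval hktail
    by_cases hxj : x ≤ j
    · have hj1 : 1 ≤ j := by omega
      have hjval : h j = 1 := by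
        have := hjA j (by simp only [mem_Icc, max_le_iff]; omega)
        simpa using this
      have hjtail : ∀ i ∈ Icc (j + 1) m, h i = 0 := by
        intro i hi
        simp only [mem_Icc] at hi
        have := hjA i (by simp only [mem_Icc, max_le_iff]; omega)
        rw [if_neg (by omega)] at this
        exact this
      have hsh : ∑ i ∈ Icc x m, h i = (∑ i ∈ Icc x (j - 1), h i) + 1 :=
        sum_split h hj1 hxj (by omega) hjval hjtail
      have := hWjk x (by simp only [mem_Icc]; omega)
      omega
    · have hsh : ∑ i ∈ Icc x m, h i = 0 := by
        apply Finset.sum_eq_zero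
        intro i hi
        simp only [mem_Icc] at hi
        have := hjA i (by simp only [mem_Icc, max_le_iff]; omega)
        rw [if_neg (by omega)] at this
        exact this
      omega

lemma Ac_ne {h : ℕ → ℕ} {j j' m : ℕ} (hj' : j' ≤ m) (hjj' : j < j')
    (h1 : Ac h j m) (h2 : Ac h j' m) : False := by
  have e1 := h1 j' (by simp only [mem_Icc, max_le_iff]; omega)
  have e2 := h2 j' (by simp only [mem_Icc, max_le_iff]; omega)
  rw [if_neg (by omega)] at e1
  rw [if_pos rfl] at e2
  omega

lemma Bc_ne {f : ℕ → ℕ} {k k' n : ℕ} (hk' : k' ≤ n) (hkk' : k < k')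
    (h1 : Bc f k n) (h2 : Bc f k' n) : False := by
  have e1 := h1 k' (by simp only [mem_Icc]; omega)
  have e2 := h2 k' (by simp only [mem_Icc]; omega)
  rw [if_neg (by omega)] at e1
  rw [if_pos rfl] at e2
  omega

lemma final_equiv {f h : ℕ → ℕ} (hf : ∀ i, f i ≤ 1) (n : ℕ) :
    Wc f h (n + 1) (n + 1 + 1) ↔
      (f (n + 1) = 1 ∧ ∀ x ∈ Icc 1 n, (∑ i ∈ Icc x n, h i) ≤ ∑ i ∈ Icc x n, f i) := by
  unfold Wc
  simp only [Nat.add_sub_cancel]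
  constructor
  · intro hW
    have h1 := hW (n + 1) (by simp)
    rw [Finset.Icc_eq_empty (by omega : ¬(n + 1 ≤ n))] at h1
    rw [Finset.sum_empty, Finset.Icc_self, Finset.sum_singleton] at h1
    have hfv : f (n + 1) = 1 := by
      have := hf (n + 1)
      omega
    refine ⟨hfv, fun x hx => ?_⟩
    simp only [mem_Icc] at hx
    have h2 := hW x (by simp only [mem_Icc]; omega)
    rw [Finset.sum_Icc_succ_top (by omega : x ≤ n + 1)] at h2
    omega
  · rintro ⟨hf1, hall⟩ x hx
    simp only [mem_Icc] at hx
    rw [Finset.sum_Icc_succ_top (by omega : x ≤ n + 1)]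
    by_cases hxn : x ≤ n
    · have := hall x (by simp only [mem_Icc]; omega)
      omega
    · have hx1 : x = n + 1 := by omega
      subst hx1
      rw [Finset.Icc_eq_empty (by omega : ¬(n + 1 ≤ n)), Finset.sum_empty,
        Finset.sum_empty]
      omega

/-! ### Measure-theoretic layer -/

variable {Ω : Type*} [MeasurableSpace Ω]

def WSet (F H : ℕ → Ω → ℕ) (j k : ℕ) : Set Ω :=
  {ω | Wc (fun i => F i ω) (fun i => H i ω) j k}

def ASet (H : ℕ → Ω → ℕ) (j m : ℕ) : Set Ω :=
  {ω | Ac (fun i => H i ω) j m}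

def BSet (F : ℕ → Ω → ℕ) (k n : ℕ) : Set Ω :=
  {ω | Bc (fun i => F i ω) k n}

lemma WSet_meas {F H : ℕ → Ω → ℕ} (hF : ∀ i, Measurable (F i)) (hH : ∀ i, Measurable (H i))
    (j k : ℕ) : MeasurableSet (WSet F H j k) := by
  have h1 : WSet F H j k = ⋂ x ∈ Icc 1 j,
      (fun ω => ((∑ i ∈ Icc x (j - 1), H i ω) + 1, ∑ i ∈ Icc x (k - 1), F i ω)) ⁻¹'
        {p : ℕ × ℕ | p.1 ≤ p.2} := by
    ext ω
    simp [WSet, Wc, Set.mem_iInter]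
  rw [h1]
  refine MeasurableSet.biInter (Set.to_countable _) fun x _ => ?_
  have hm : Measurable fun ω => ((∑ i ∈ Icc x (j - 1), H i ω) + 1,
      ∑ i ∈ Icc x (k - 1), F i ω) := by
    apply Measurable.prodMk
    · exact (Finset.measurable_sum _ fun i _ => hH i).add_const 1
    · exact Finset.measurable_sum _ fun i _ => hF i
  exact hm MeasurableSet.of_discrete

lemma ASet_meas {H : ℕ → Ω → ℕ} (hH : ∀ i, Measurable (H i)) (j m : ℕ) :
    MeasurableSet (ASet H j m) := by
  have h1 : ASet H j m = ⋂ i ∈ Icc (max j 1) m, (H i) ⁻¹' {if i = j then 1 else 0} := by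
    ext ω
    simp [ASet, Ac, Set.mem_iInter]
  rw [h1]
  exact MeasurableSet.biInter (Set.to_countable _) fun i _ => hH i MeasurableSet.of_discrete

lemma BSet_meas {F : ℕ → Ω → ℕ} (hF : ∀ i, Measurable (F i)) (k n : ℕ) :
    MeasurableSet (BSet F k n) := by
  have h1 : BSet F k n = ⋂ i ∈ Icc k n, (F i) ⁻¹' {if i = k then 1 else 0} := by
    ext ω
    simp [BSet, Bc, Set.mem_iInter]
  rw [h1]
  exact MeasurableSet.biInter (Set.to_countable _) fun i _ => hF i MeasurableSet.of_discrete

lemma indep_of_coords (P : Measure Ω) [IsProbabilityMeasure P]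
    {ι : Type*} (g : ι → Ω → ℕ) (hg : ∀ i, Measurable (g i))
    (hind : iIndepFun g P)
    (S T : Finset ι) (hST : Disjoint S T) (E₁ E₂ : Set Ω)
    (h₁ : ∀ ω ω', (∀ i ∈ S, g i ω = g i ω') → ω ∈ E₁ → ω' ∈ E₁)
    (h₂ : ∀ ω ω', (∀ i ∈ T, g i ω = g i ω') → ω ∈ E₂ → ω' ∈ E₂) :
    P (E₁ ∩ E₂) = P E₁ * P E₂ := by
  have hIF := hind.indepFun_finset S T hST hg
  have hE1 : E₁ = (fun ω (i : S) => g i ω) ⁻¹' ((fun ω (i : S) => g i ω) '' E₁) := by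
    apply Set.Subset.antisymm (Set.subset_preimage_image _ E₁)
    rintro ω ⟨ω', hω', hXX⟩
    exact h₁ ω' ω (fun i hi => congrFun hXX ⟨i, hi⟩) hω'
  have hE2 : E₂ = (fun ω (i : T) => g i ω) ⁻¹' ((fun ω (i : T) => g i ω) '' E₂) := by
    apply Set.Subset.antisymm (Set.subset_preimage_image _ E₂)
    rintro ω ⟨ω', hω', hXX⟩
    exact h₂ ω' ω (fun i hi => congrFun hXX ⟨i, hi⟩) hω'
  calc P (E₁ ∩ E₂) = P ((fun ω (i : S) => g i ω) ⁻¹' ((fun ω (i : S) => g i ω) '' E₁) ∩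
      (fun ω (i : T) => g i ω) ⁻¹' ((fun ω (i : T) => g i ω) '' E₂)) := by rw [← hE1, ← hE2]
    _ = P ((fun ω (i : S) => g i ω) ⁻¹' ((fun ω (i : S) => g i ω) '' E₁)) *
        P ((fun ω (i : T) => g i ω) ⁻¹' ((fun ω (i : T) => g i ω) '' E₂)) :=
      hIF.measure_inter_preimage_eq_mul _ _ (.of_discrete) (.of_discrete)
    _ = P E₁ * P E₂ := by rw [← hE1, ← hE2]

lemma pattern (P : Measure Ω) {ι : Type*} (g : ι → Ω → ℕ)
    (hind : iIndepFun g P)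
    (S : Finset ι) (u : ι → ℕ) :
    P {ω | ∀ c ∈ S, g c ω = u c} = ∏ c ∈ S, P {ω | g c ω = u c} := by
  have h1 : {ω | ∀ c ∈ S, g c ω = u c} = ⋂ c ∈ S, (g c) ⁻¹' {u c} := by
    ext ω; simp [Set.mem_iInter]
  have h2 : ∀ c, {ω | g c ω = u c} = (g c) ⁻¹' {u c} := by
    intro c; ext ω; simp
  rw [h1, hind.meas_biInter (fun i _ => ⟨{u i}, MeasurableSet.singleton _, rfl⟩)]
  exact Finset.prod_congr rfl fun c _ => by rw [h2]

end CSuccAux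

namespace CSuccAux

variable {Ω : Type*} [MeasurableSpace Ω] (P : Measure Ω) [IsProbabilityMeasure P]
  (α : ℕ → ℝ) (F H : ℕ → Ω → ℕ)

lemma H_zero_prob (hα : ∀ k, α k ∈ Set.Icc (0:ℝ) 1)
    (hHmeas : ∀ i, Measurable (H i)) (hHval : ∀ i ω, H i ω = 0 ∨ H i ω = 1)
    (hH1 : ∀ i, 1 ≤ i → P {ω | H i ω = 1} = ENNReal.ofReal (α i)) :
    ∀ i, 1 ≤ i → P {ω | H i ω = 0} = ENNReal.ofReal (1 - α i) := by
  intro i hi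
  have h1 : {ω | H i ω = 0} = {ω | H i ω = 1}ᶜ := by
    ext ω
    simp only [Set.mem_setOf_eq, Set.mem_compl_iff]
    rcases hHval i ω with h | h <;> simp [h]
  have h2 : MeasurableSet {ω | H i ω = 1} := hHmeas i (MeasurableSet.singleton 1)
  rw [h1, prob_compl_eq_one_sub h2, hH1 i hi,
    ENNReal.ofReal_sub _ (hα i).1, ENNReal.ofReal_one]

lemma PA (hα0 : α 0 = 1) (hα : ∀ k, α k ∈ Set.Icc (0:ℝ) 1)
    (hHmeas : ∀ i, Measurable (H i)) (hHval : ∀ i ω, H i ω = 0 ∨ H i ω = 1)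
    (hindep : iIndepFun (Sum.elim F H) P)
    (hH1 : ∀ i, 1 ≤ i → P {ω | H i ω = 1} = ENNReal.ofReal (α i))
    {j m : ℕ} (hjm : j ≤ m) :
    P (ASet H j m) = ENNReal.ofReal (α j * ∏ i ∈ Finset.Icc (j + 1) m, (1 - α i)) := by
  have hpat : P (ASet H j m) =
      ∏ i ∈ Finset.Icc (max j 1) m, P {ω | H i ω = if i = j then 1 else 0} := by
    have h1 : ASet H j m = {ω | ∀ c ∈ (Finset.Icc (max j 1) m).map Function.Embedding.inr,
        Sum.elim F H c ω = Sum.elim (fun _ => 0) (fun i => if i = j then 1 else 0) c} := by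
      ext ω
      simp only [ASet, Ac, Set.mem_setOf_eq, Finset.forall_mem_map]
      rfl
    rw [h1, pattern P (Sum.elim F H) hindep, Finset.prod_map]
    rfl
  rw [hpat]
  rcases Nat.eq_zero_or_pos j with hj0 | hjpos
  · subst hj0
    have hmax : max 0 1 = 1 := rfl
    rw [hmax]
    have hprod : ∏ i ∈ Finset.Icc 1 m, P {ω | H i ω = if i = 0 then 1 else 0} =
        ∏ i ∈ Finset.Icc 1 m, ENNReal.ofReal (1 - α i) := by
      refine Finset.prod_congr rfl fun i hi => ?_
      simp only [Finset.mem_Icc] at hi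
      rw [if_neg (by omega)]
      exact H_zero_prob P α H hα hHmeas hHval hH1 i hi.1
    rw [hprod, ← ENNReal.ofReal_prod_of_nonneg (fun i hi => by
      have := (hα i).2; linarith)]
    rw [hα0, one_mul]
  · have hmax : max j 1 = j := by omega
    rw [hmax]
    have hins : Finset.Icc j m = insert j (Finset.Icc (j + 1) m) := by
      ext i
      simp only [Finset.mem_Icc, Finset.mem_insert]
      omega
    rw [hins, Finset.prod_insert (by simp)]
    rw [if_pos rfl, hH1 j hjpos]
    have hprod : ∏ i ∈ Finset.Icc (j + 1) m, P {ω | H i ω = if i = j then 1 else 0} =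
        ∏ i ∈ Finset.Icc (j + 1) m, ENNReal.ofReal (1 - α i) := by
      refine Finset.prod_congr rfl fun i hi => ?_
      simp only [Finset.mem_Icc] at hi
      rw [if_neg (by omega)]
      exact H_zero_prob P α H hα hHmeas hHval hH1 i (by omega)
    rw [hprod, ← ENNReal.ofReal_prod_of_nonneg (fun i hi => by
      have := (hα i).2; linarith)]
    rw [← ENNReal.ofReal_mul (hα j).1]

lemma F_zero_prob (hα : ∀ k, α k ∈ Set.Icc (0:ℝ) 1)
    (hFmeas : ∀ i, Measurable (F i)) (hFval : ∀ i ω, F i ω = 0 ∨ F i ω = 1)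
    (hF1 : ∀ i, 1 ≤ i → P {ω | F i ω = 1} = ENNReal.ofReal (α i)) :
    ∀ i, 1 ≤ i → P {ω | F i ω = 0} = ENNReal.ofReal (1 - α i) := by
  intro i hi
  have h1 : {ω | F i ω = 0} = {ω | F i ω = 1}ᶜ := by
    ext ω
    simp only [Set.mem_setOf_eq, Set.mem_compl_iff]
    rcases hFval i ω with h | h <;> simp [h]
  have h2 : MeasurableSet {ω | F i ω = 1} := hFmeas i (MeasurableSet.singleton 1)
  rw [h1, prob_compl_eq_one_sub h2, hF1 i hi,
    ENNReal.ofReal_sub _ (hα i).1, ENNReal.ofReal_one]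

lemma PB (hα : ∀ k, α k ∈ Set.Icc (0:ℝ) 1)
    (hFmeas : ∀ i, Measurable (F i)) (hFval : ∀ i ω, F i ω = 0 ∨ F i ω = 1)
    (hindep : iIndepFun (Sum.elim F H) P)
    (hF1 : ∀ i, 1 ≤ i → P {ω | F i ω = 1} = ENNReal.ofReal (α i))
    {k n : ℕ} (hk : 1 ≤ k) (hkn : k ≤ n) :
    P (BSet F k n) = ENNReal.ofReal (α k * ∏ i ∈ Finset.Icc (k + 1) n, (1 - α i)) := by
  have hpat : P (BSet F k n) =
      ∏ i ∈ Finset.Icc k n, P {ω | F i ω = if i = k then 1 else 0} := by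
    have h1 : BSet F k n = {ω | ∀ c ∈ (Finset.Icc k n).map Function.Embedding.inl,
        Sum.elim F H c ω = Sum.elim (fun i => if i = k then 1 else 0) (fun _ => 0) c} := by
      ext ω
      simp only [BSet, Bc, Set.mem_setOf_eq, Finset.forall_mem_map]
      rfl
    rw [h1, pattern P (Sum.elim F H) hindep, Finset.prod_map]
    rfl
  rw [hpat]
  have hins : Finset.Icc k n = insert k (Finset.Icc (k + 1) n) := by
    ext i
    simp only [Finset.mem_Icc, Finset.mem_insert]
    omega
  rw [hins, Finset.prod_insert (by simp), if_pos rfl, hF1 k hk]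
  have hprod : ∏ i ∈ Finset.Icc (k + 1) n, P {ω | F i ω = if i = k then 1 else 0} =
      ∏ i ∈ Finset.Icc (k + 1) n, ENNReal.ofReal (1 - α i) := by
    refine Finset.prod_congr rfl fun i hi => ?_
    simp only [Finset.mem_Icc] at hi
    rw [if_neg (by omega)]
    exact F_zero_prob P α F hα hFmeas hFval hF1 i (by omega)
  rw [hprod, ← ENNReal.ofReal_prod_of_nonneg (fun i hi => by
    have := (hα i).2; linarith)]
  rw [← ENNReal.ofReal_mul (hα k).1]

lemma factor
    (hFmeas : ∀ i, Measurable (F i)) (hHmeas : ∀ i, Measurable (H i))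
    (hindep : iIndepFun (Sum.elim F H) P)
    {j k m n : ℕ} :
    P (ASet H j m ∩ BSet F k n ∩ WSet F H j k) =
      P (ASet H j m) * P (BSet F k n) * P (WSet F H j k) := by
  have hg : ∀ c : ℕ ⊕ ℕ, Measurable (Sum.elim F H c) := by
    rintro (i | i)
    exacts [hFmeas i, hHmeas i]
  have hAmono : ∀ (s : Finset (ℕ ⊕ ℕ)),
      ((Finset.Icc (max j 1) m).map Function.Embedding.inr ⊆ s) →
      ∀ ω ω', (∀ c ∈ s, Sum.elim F H c ω = Sum.elim F H c ω') →
      ω ∈ ASet H j m → ω' ∈ ASet H j m := by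
    intro s hsub ω ω' hag hA i hi
    have hmem : (Sum.inr i : ℕ ⊕ ℕ) ∈ s := hsub (Finset.mem_map_of_mem _ hi)
    have := hag _ hmem
    simp only [Sum.elim_inr] at this
    show H i ω' = if i = j then 1 else 0
    rw [← this]
    exact hA i hi
  have hBmono : ∀ (s : Finset (ℕ ⊕ ℕ)), ((Finset.Icc k n).map Function.Embedding.inl ⊆ s) →
      ∀ ω ω', (∀ c ∈ s, Sum.elim F H c ω = Sum.elim F H c ω') →
      ω ∈ BSet F k n → ω' ∈ BSet F k n := by
    intro s hsub ω ω' hag hB i hi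
    have hmem : (Sum.inl i : ℕ ⊕ ℕ) ∈ s := hsub (Finset.mem_map_of_mem _ hi)
    have := hag _ hmem
    simp only [Sum.elim_inl] at this
    show F i ω' = if i = k then 1 else 0
    rw [← this]
    exact hB i hi
  have hWmono : ∀ ω ω',
      (∀ c ∈ ((Finset.Icc 1 (k - 1)).map Function.Embedding.inl ∪
        (Finset.Icc 1 (j - 1)).map Function.Embedding.inr),
        Sum.elim F H c ω = Sum.elim F H c ω') →
      ω ∈ WSet F H j k → ω' ∈ WSet F H j k := by
    intro ω ω' hag hW x hx
    simp only [Finset.mem_Icc] at hx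
    have hs1 : ∑ i ∈ Finset.Icc x (j - 1), H i ω' = ∑ i ∈ Finset.Icc x (j - 1), H i ω := by
      refine Finset.sum_congr rfl fun i hi => ?_
      simp only [Finset.mem_Icc] at hi
      have hmem : (Sum.inr i : ℕ ⊕ ℕ) ∈ (Finset.Icc 1 (k - 1)).map Function.Embedding.inl ∪
          (Finset.Icc 1 (j - 1)).map Function.Embedding.inr :=
        Finset.mem_union_right _ (Finset.mem_map_of_mem _ (by simp only [Finset.mem_Icc]; omega))
      have := hag _ hmem
      simpa using this.symm
    have hs2 : ∑ i ∈ Finset.Icc x (k - 1), F i ω' = ∑ i ∈ Finset.Icc x (k - 1), F i ω := by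
      refine Finset.sum_congr rfl fun i hi => ?_
      simp only [Finset.mem_Icc] at hi
      have hmem : (Sum.inl i : ℕ ⊕ ℕ) ∈ (Finset.Icc 1 (k - 1)).map Function.Embedding.inl ∪
          (Finset.Icc 1 (j - 1)).map Function.Embedding.inr :=
        Finset.mem_union_left _ (Finset.mem_map_of_mem _ (by simp only [Finset.mem_Icc]; omega))
      have := hag _ hmem
      simpa using this.symm
    show (∑ i ∈ Finset.Icc x (j - 1), H i ω') + 1 ≤ ∑ i ∈ Finset.Icc x (k - 1), F i ω'
    rw [hs1, hs2]
    exact hW x (by simp only [Finset.mem_Icc]; omega)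
  have step1 : P (ASet H j m ∩ BSet F k n ∩ WSet F H j k) =
      P (ASet H j m ∩ BSet F k n) * P (WSet F H j k) := by
    apply indep_of_coords P (Sum.elim F H) hg hindep
      ((Finset.Icc (max j 1) m).map Function.Embedding.inr ∪
        (Finset.Icc k n).map Function.Embedding.inl)
      ((Finset.Icc 1 (k - 1)).map Function.Embedding.inl ∪
        (Finset.Icc 1 (j - 1)).map Function.Embedding.inr)
    · rw [Finset.disjoint_left]
      rintro (i | i) hc hc' <;>
        (simp [Finset.mem_map, Function.Embedding.inl_apply, Function.Embedding.inr_apply,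
          sup_le_iff] at hc hc') <;> omega
    · rintro ω ω' hag ⟨hA, hB⟩
      exact ⟨hAmono _ Finset.subset_union_left ω ω' hag hA,
        hBmono _ Finset.subset_union_right ω ω' hag hB⟩
    · exact hWmono
  have step2 : P (ASet H j m ∩ BSet F k n) = P (ASet H j m) * P (BSet F k n) := by
    apply indep_of_coords P (Sum.elim F H) hg hindep
      ((Finset.Icc (max j 1) m).map Function.Embedding.inr)
      ((Finset.Icc k n).map Function.Embedding.inl)
    · rw [Finset.disjoint_left]
      rintro (i | i) hc hc' <;>
        (simp [Finset.mem_map, Function.Embedding.inl_apply, Function.Embedding.inr_apply,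
          sup_le_iff] at hc hc') <;> omega
    · exact fun ω ω' hag hA => hAmono _ (Finset.Subset.refl _) ω ω' hag hA
    · exact fun ω ω' hag hB => hBmono _ (Finset.Subset.refl _) ω ω' hag hB
  rw [step1, step2]

lemma Wsucc_eq_sum
    (hFmeas : ∀ i, Measurable (F i)) (hHmeas : ∀ i, Measurable (H i))
    (hFval : ∀ i ω, F i ω = 0 ∨ F i ω = 1)
    (hHval : ∀ i ω, H i ω = 0 ∨ H i ω = 1)
    (m n : ℕ) (hmn : m ≤ n) :
    P (WSet F H (m + 1) (n + 1)) = ∑ j ∈ Finset.range (m + 1), ∑ k ∈ Finset.Icc (m + 1) n,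
      P (ASet H j m ∩ BSet F k n ∩ WSet F H j k) := by
  have hdecomp : WSet F H (m + 1) (n + 1) =
      ⋃ p ∈ ((Finset.range (m + 1)) ×ˢ (Finset.Icc (m + 1) n) : Finset (ℕ × ℕ)),
        (ASet H p.1 m ∩ BSet F p.2 n ∩ WSet F H p.1 p.2) := by
    ext ω
    have hfle : ∀ i, F i ω ≤ 1 := fun i => by rcases hFval i ω with h | h <;> omega
    have hhle : ∀ i, H i ω ≤ 1 := fun i => by rcases hHval i ω with h | h <;> omega
    have hkey := key hfle hhle hmn
    simp only [Set.mem_iUnion, exists_prop, Finset.mem_product]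
    constructor
    · intro hW
      obtain ⟨j, hj, k, hk, hA, hB, hWjk⟩ := hkey.1 hW
      exact ⟨(j, k), ⟨hj, hk⟩, ⟨hA, hB⟩, hWjk⟩
    · rintro ⟨p, ⟨hj, hk⟩, ⟨hA, hB⟩, hWjk⟩
      exact hkey.2 ⟨p.1, hj, p.2, hk, hA, hB, hWjk⟩
  have hpd : Set.PairwiseDisjoint
      ↑((Finset.range (m + 1)) ×ˢ (Finset.Icc (m + 1) n) : Finset (ℕ × ℕ))
      (fun p : ℕ × ℕ => ASet H p.1 m ∩ BSet F p.2 n ∩ WSet F H p.1 p.2) := by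
    intro p hp q hq hne
    simp only [Finset.coe_product, Set.mem_prod, Finset.mem_coe, Finset.mem_range,
      Finset.mem_Icc] at hp hq
    refine Set.disjoint_left.2 fun ω hωp hωq => hne ?_
    have hA1 : Ac (fun i => H i ω) p.1 m := hωp.1.1
    have hB1 : Bc (fun i => F i ω) p.2 n := hωp.1.2
    have hA2 : Ac (fun i => H i ω) q.1 m := hωq.1.1
    have hB2 : Bc (fun i => F i ω) q.2 n := hωq.1.2
    have h1 : p.1 = q.1 := by
      rcases lt_trichotomy p.1 q.1 with h | h | h
      · exact absurd (Ac_ne (by omega) h hA1 hA2) not_false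
      · exact h
      · exact absurd (Ac_ne (by omega) h hA2 hA1) not_false
    have h2 : p.2 = q.2 := by
      rcases lt_trichotomy p.2 q.2 with h | h | h
      · exact absurd (Bc_ne (by omega) h hB1 hB2) not_false
      · exact h
      · exact absurd (Bc_ne (by omega) h hB2 hB1) not_false
    exact Prod.ext h1 h2
  rw [hdecomp, measure_biUnion_finset hpd (fun p _ =>
    ((ASet_meas hHmeas p.1 m).inter (BSet_meas hFmeas p.2 n)).inter
      (WSet_meas hFmeas hHmeas p.1 p.2)), Finset.sum_product]

lemma main_lemma (hα0 : α 0 = 1) (hα : ∀ k, α k ∈ Set.Icc (0:ℝ) 1)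
    (hFmeas : ∀ i, Measurable (F i)) (hHmeas : ∀ i, Measurable (H i))
    (hFval : ∀ i ω, F i ω = 0 ∨ F i ω = 1)
    (hHval : ∀ i ω, H i ω = 0 ∨ H i ω = 1)
    (hindep : iIndepFun (Sum.elim F H) P)
    (hF1 : ∀ i, 1 ≤ i → P {ω | F i ω = 1} = ENNReal.ofReal (α i))
    (hH1 : ∀ i, 1 ≤ i → P {ω | H i ω = 1} = ENNReal.ofReal (α i))
    (c : ℤ → ℤ → ℝ)
    (hc1 : ∀ n : ℕ, c (-1) n = 1)
    (hcr : ∀ m n : ℕ, m ≤ n →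
      c m n = ∑ j ∈ Finset.range (m + 1), ∑ k ∈ Finset.Icc (m + 1) n,
        (α j * ∏ i ∈ Finset.Icc (j + 1) m, (1 - α i)) *
          (α k * ∏ i ∈ Finset.Icc (k + 1) n, (1 - α i)) *
            c ((j : ℤ) - 1) ((k : ℤ) - 1)) :
    ∀ N m : ℕ, m ≤ N → c m N = (P (WSet F H (m + 1) (N + 1))).toReal := by
  intro N
  induction N using Nat.strong_induction_on with
  | _ N IH =>
    intro m hm
    rw [hcr m N hm]
    rw [Wsucc_eq_sum P F H hFmeas hHmeas hFval hHval m N hm]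
    rw [ENNReal.toReal_sum (fun j _ => ENNReal.sum_ne_top.2 fun k _ => measure_ne_top P _)]
    refine Finset.sum_congr rfl fun j hj => ?_
    rw [ENNReal.toReal_sum (fun k _ => measure_ne_top P _)]
    refine Finset.sum_congr rfl fun k hk => ?_
    simp only [Finset.mem_range] at hj
    simp only [Finset.mem_Icc] at hk
    have hfac := factor P F H hFmeas hHmeas hindep (j := j) (k := k) (m := m) (n := N)
    rw [hfac, ENNReal.toReal_mul, ENNReal.toReal_mul]
    rw [PA P α F H hα0 hα hHmeas hHval hindep hH1 (by omega : j ≤ m)]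
    rw [PB P α F H hα hFmeas hFval hindep hF1 (by omega : 1 ≤ k) (by omega : k ≤ N)]
    have hnn1 : (0:ℝ) ≤ α j * ∏ i ∈ Finset.Icc (j + 1) m, (1 - α i) :=
      mul_nonneg (hα j).1 (Finset.prod_nonneg fun i _ => by have := (hα i).2; linarith)
    have hnn2 : (0:ℝ) ≤ α k * ∏ i ∈ Finset.Icc (k + 1) N, (1 - α i) :=
      mul_nonneg (hα k).1 (Finset.prod_nonneg fun i _ => by have := (hα i).2; linarith)
    rw [ENNReal.toReal_ofReal hnn1, ENNReal.toReal_ofReal hnn2]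
    have hc_eq : c ((j : ℤ) - 1) ((k : ℤ) - 1) = (P (WSet F H j k)).toReal := by
      rcases Nat.eq_zero_or_pos j with hj0 | hjpos
      · subst hj0
        have hWuniv : WSet F H 0 k = Set.univ := by
          ext ω
          simp [WSet, Wc, Finset.Icc_eq_empty (by omega : ¬(1:ℕ) ≤ 0)]
        rw [hWuniv, measure_univ, ENNReal.toReal_one]
        have hcast1 : ((0:ℕ) : ℤ) - 1 = -1 := by norm_num
        have hcast2 : ((k:ℤ) - 1) = ((k - 1 : ℕ) : ℤ) := by omega
        rw [hcast1, hcast2, hc1]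
      · have hklt : k - 1 < N := by omega
        have hIH := IH (k - 1) hklt (j - 1) (by omega)
        have he1 : j - 1 + 1 = j := by omega
        have he2 : k - 1 + 1 = k := by omega
        rw [he1, he2] at hIH
        have hcast1 : ((j:ℤ) - 1) = ((j - 1 : ℕ) : ℤ) := by omega
        have hcast2 : ((k:ℤ) - 1) = ((k - 1 : ℕ) : ℤ) := by omega
        rw [hcast1, hcast2, hIH]
    rw [hc_eq]

end CSuccAux

open CSuccAux in
/-- For every `n ≥ 0`, `c_{n,n+1} = α_{n+1} · P(Σ_{i=k}^n Z_i ≥ 0 for all k = 1,…,n)`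
where `Z_i = F_i − H_i`; in particular, when `α_{n+1} > 0`,
`P^n = c_{n,n+1}/α_{n+1}` equals this probability.  (The condition
`Σ_{i=k}^n (F_i − H_i) ≥ 0` is expressed as `Σ_{i=k}^n H_i ≤ Σ_{i=k}^n F_i`.) -/
theorem c_succ_eq_random_walk_probability
    {Ω : Type*} [MeasurableSpace Ω] (P : Measure Ω) [IsProbabilityMeasure P]
    (α : ℕ → ℝ) (hα0 : α 0 = 1) (hα : ∀ k, α k ∈ Set.Icc (0:ℝ) 1)
    (F H : ℕ → Ω → ℕ)
    (hFmeas : ∀ i, Measurable (F i)) (hHmeas : ∀ i, Measurable (H i))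
    (hFval : ∀ i ω, F i ω = 0 ∨ F i ω = 1)
    (hHval : ∀ i ω, H i ω = 0 ∨ H i ω = 1)
    (hindep : iIndepFun (Sum.elim F H) P)
    (hF1 : ∀ i, 1 ≤ i → P {ω | F i ω = 1} = ENNReal.ofReal (α i))
    (hH1 : ∀ i, 1 ≤ i → P {ω | H i ω = 1} = ENNReal.ofReal (α i))
    (c : ℤ → ℤ → ℝ)
    (hc1 : ∀ n : ℕ, c (-1) n = 1)
    (hcr : ∀ m n : ℕ, m ≤ n →
      c m n = ∑ j ∈ Finset.range (m + 1), ∑ k ∈ Finset.Icc (m + 1) n,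
        (α j * ∏ i ∈ Finset.Icc (j + 1) m, (1 - α i)) *
          (α k * ∏ i ∈ Finset.Icc (k + 1) n, (1 - α i)) *
            c ((j : ℤ) - 1) ((k : ℤ) - 1))
    (n : ℕ) :
    c n (n + 1) = α (n + 1) * (P {ω | ∀ k ∈ Finset.Icc 1 n,
        (∑ i ∈ Finset.Icc k n, H i ω) ≤ ∑ i ∈ Finset.Icc k n, F i ω}).toReal ∧
    (0 < α (n + 1) →
      c n (n + 1) / α (n + 1) = (P {ω | ∀ k ∈ Finset.Icc 1 n,
        (∑ i ∈ Finset.Icc k n, H i ω) ≤ ∑ i ∈ Finset.Icc k n, F i ω}).toReal) := by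
  have hg : ∀ c : ℕ ⊕ ℕ, Measurable (Sum.elim F H c) := by
    rintro (i | i)
    exacts [hFmeas i, hHmeas i]
  set V : Set Ω := {ω | ∀ k ∈ Finset.Icc 1 n,
    (∑ i ∈ Finset.Icc k n, H i ω) ≤ ∑ i ∈ Finset.Icc k n, F i ω} with hV
  have hmain := main_lemma P α F H hα0 hα hFmeas hHmeas hFval hHval hindep hF1 hH1
    c hc1 hcr (n + 1) n (by omega)
  have hsplit : WSet F H (n + 1) (n + 1 + 1) = {ω | F (n + 1) ω = 1} ∩ V := by
    ext ω
    have hfle : ∀ i, F i ω ≤ 1 := fun i => by rcases hFval i ω with h | h <;> omega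
    have := final_equiv (f := fun i => F i ω) (h := fun i => H i ω) hfle n
    constructor
    · intro hW
      obtain ⟨h1, h2⟩ := this.1 hW
      exact ⟨h1, h2⟩
    · rintro ⟨h1, h2⟩
      exact this.2 ⟨h1, h2⟩
  have hPsplit : P (WSet F H (n + 1) (n + 1 + 1)) = P {ω | F (n + 1) ω = 1} * P V := by
    rw [hsplit]
    apply indep_of_coords P (Sum.elim F H) hg hindep
      ({Sum.inl (n + 1)} : Finset (ℕ ⊕ ℕ))
      ((Finset.Icc 1 n).map Function.Embedding.inl ∪ (Finset.Icc 1 n).map Function.Embedding.inr)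
    · rw [Finset.disjoint_left]
      rintro c hc hc'
      simp only [Finset.mem_singleton] at hc
      subst hc
      simp [Finset.mem_map, Function.Embedding.inl_apply, Function.Embedding.inr_apply] at hc'
    · intro ω ω' hag h1
      have := hag (Sum.inl (n + 1)) (Finset.mem_singleton_self _)
      simp only [Sum.elim_inl] at this
      show F (n + 1) ω' = 1
      rw [← this]
      exact h1
    · intro ω ω' hag hmem k hk
      simp only [Finset.mem_Icc] at hk
      have hs1 : ∑ i ∈ Finset.Icc k n, H i ω' = ∑ i ∈ Finset.Icc k n, H i ω := by
        refine Finset.sum_congr rfl fun i hi => ?_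
        simp only [Finset.mem_Icc] at hi
        have hmem2 : (Sum.inr i : ℕ ⊕ ℕ) ∈ (Finset.Icc 1 n).map Function.Embedding.inl ∪
            (Finset.Icc 1 n).map Function.Embedding.inr :=
          Finset.mem_union_right _ (Finset.mem_map_of_mem _
            (by simp only [Finset.mem_Icc]; omega))
        have := hag _ hmem2
        simpa using this.symm
      have hs2 : ∑ i ∈ Finset.Icc k n, F i ω' = ∑ i ∈ Finset.Icc k n, F i ω := by
        refine Finset.sum_congr rfl fun i hi => ?_
        simp only [Finset.mem_Icc] at hi
        have hmem2 : (Sum.inl i : ℕ ⊕ ℕ) ∈ (Finset.Icc 1 n).map Function.Embedding.inl ∪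
            (Finset.Icc 1 n).map Function.Embedding.inr :=
          Finset.mem_union_left _ (Finset.mem_map_of_mem _
            (by simp only [Finset.mem_Icc]; omega))
        have := hag _ hmem2
        simpa using this.symm
      rw [hs1, hs2]
      exact hmem k (by simp only [Finset.mem_Icc]; omega)
  push_cast at hmain
  have hfirst : c n (n + 1) = α (n + 1) * (P V).toReal := by
    rw [hmain, hPsplit, ENNReal.toReal_mul, hF1 (n + 1) (by omega),
      ENNReal.toReal_ofReal (hα (n + 1)).1]
  refine ⟨hfirst, fun hpos => ?_⟩
  rw [hfirst, mul_div_cancel_left₀ _ (ne_of_gt hpos)]
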